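/- Let A, B be n×n positive definite matrices, let a, b ≥ 0, and let 0 ≤ c ≤ 2ab. Then the eigenvalue vector of a²A + b²B + c(A ♮ B) is weakly majorized by the eigenvalue vector of W_{a,b}(A,B) = a²A + b²B + ab((AB)^{1/2} + (BA)^{1/2}). -/

import Mathlib

open Matrix ComplexOrder

namespace Heron

variable {n : ℕ}

def WeakMaj {n : ℕ} (x y : Fin n → ℝ) : Prop :=
  ∀ s : Finset (Fin n), ∃ t : Finset (Fin n),
    t.card = s.card ∧ ∑ i ∈ s, x i ≤ ∑ i ∈ t, y i

def Maj {n : ℕ} (x y : Fin n → ℝ) : Prop :=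
  WeakMaj x y ∧ ∑ i, x i = ∑ i, y i

lemma sandwich_posSemidef {S T : Matrix (Fin n) (Fin n) ℂ} (hS : S.IsHermitian)
    (hT : T.PosSemidef) : (S * T * S).PosSemidef := by
  have h := hT.mul_mul_conjTranspose_same S
  rwa [hS.eq] at h

/-- `Matrix.PosSemidef.sqrt` was removed from Mathlib; restored with its old definition. -/
noncomputable def _root_.Matrix.PosSemidef.sqrt {m 𝕜 : Type*} [Fintype m] [RCLike 𝕜]
    [DecidableEq m] {A : Matrix m m 𝕜} (hA : A.PosSemidef) : Matrix m m 𝕜 :=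
  hA.1.eigenvectorUnitary.1 * diagonal ((↑) ∘ (√·) ∘ hA.1.eigenvalues) *
    (star hA.1.eigenvectorUnitary : Matrix m m 𝕜)

lemma _root_.Matrix.PosSemidef.posSemidef_sqrt {m 𝕜 : Type*} [Fintype m] [RCLike 𝕜]
    [DecidableEq m] {A : Matrix m m 𝕜} (hA : A.PosSemidef) : hA.sqrt.PosSemidef := by
  apply PosSemidef.mul_mul_conjTranspose_same
  refine posSemidef_diagonal_iff.mpr fun i ↦ ?_
  rw [Function.comp_apply, RCLike.nonneg_iff]
  constructor
  · simp only [Function.comp_apply, RCLike.ofReal_re]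
    exact Real.sqrt_nonneg _
  · simp only [Function.comp_apply, RCLike.ofReal_im]

noncomputable def geomMean {A B : Matrix (Fin n) (Fin n) ℂ}
    (hA : A.PosDef) (hB : B.PosDef) : Matrix (Fin n) (Fin n) ℂ :=
  hA.posSemidef.sqrt *
    (sandwich_posSemidef hA.posSemidef.posSemidef_sqrt.isHermitian.inv
        hB.posSemidef).sqrt *
    hA.posSemidef.sqrt

lemma geomMean_posSemidef {A B : Matrix (Fin n) (Fin n) ℂ}
    (hA : A.PosDef) (hB : B.PosDef) : (geomMean hA hB).PosSemidef :=
  sandwich_posSemidef hA.posSemidef.posSemidef_sqrt.isHermitian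
    (Matrix.PosSemidef.posSemidef_sqrt _)

noncomputable def specMean {A B : Matrix (Fin n) (Fin n) ℂ}
    (hA : A.PosDef) (hB : B.PosDef) : Matrix (Fin n) (Fin n) ℂ :=
  (geomMean_posSemidef hA.inv hB).sqrt * A * (geomMean_posSemidef hA.inv hB).sqrt

def HasPosSpectrum (M : Matrix (Fin n) (Fin n) ℂ) : Prop :=
  ∀ z ∈ spectrum ℂ M, 0 < z.re ∧ z.im = 0

def IsPrincipalSqrt (M S : Matrix (Fin n) (Fin n) ℂ) : Prop :=
  S * S = M ∧ HasPosSpectrum S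

noncomputable def absMat (Y : Matrix (Fin n) (Fin n) ℂ) : Matrix (Fin n) (Fin n) ℂ :=
  (Matrix.posSemidef_conjTranspose_mul_self Y).sqrt

noncomputable def posPart (H : Matrix (Fin n) (Fin n) ℂ) : Matrix (Fin n) (Fin n) ℂ :=
  ((1 : ℂ) / 2) • (absMat H + H)

/-! ### Auxiliary lemmas for the main theorem -/

lemma _root_.Matrix.PosSemidef.sqrt_mul_self {m 𝕜 : Type*} [Fintype m] [RCLike 𝕜]
    [DecidableEq m] {A : Matrix m m 𝕜} (hA : A.PosSemidef) : hA.sqrt * hA.sqrt = A := by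
  set U : Matrix m m 𝕜 := (hA.1.eigenvectorUnitary : Matrix m m 𝕜) with hUdef
  set D : Matrix m m 𝕜 := diagonal ((↑) ∘ (√·) ∘ hA.1.eigenvalues) with hDdef
  have hU : (star hA.1.eigenvectorUnitary : Matrix m m 𝕜) * U = 1 :=
    Unitary.coe_star_mul_self _
  have hsq : hA.sqrt = U * D * (star hA.1.eigenvectorUnitary : Matrix m m 𝕜) := rfl
  conv_rhs => rw [hA.1.spectral_theorem, Unitary.conjStarAlgAut_apply]
  rw [hsq]
  calc U * D * (star hA.1.eigenvectorUnitary : Matrix m m 𝕜) *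
        (U * D * (star hA.1.eigenvectorUnitary : Matrix m m 𝕜))
      = U * (D * ((star hA.1.eigenvectorUnitary : Matrix m m 𝕜) * U) * D) *
        (star hA.1.eigenvectorUnitary : Matrix m m 𝕜) := by simp only [Matrix.mul_assoc]
    _ = _ := by
      rw [hU, Matrix.mul_one, hDdef, diagonal_mul_diagonal]
      congr 2
      congr 1
      funext i
      simp only [Function.comp_apply, Pi.mul_apply]
      rw [← RCLike.ofReal_mul, Real.mul_self_sqrt (hA.eigenvalues_nonneg i)]

lemma psd_smul {M : Matrix (Fin n) (Fin n) ℂ} (hM : M.PosSemidef) {r : ℝ} (hr : 0 ≤ r) :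
    (((r : ℂ)) • M).PosSemidef := by
  refine Matrix.PosSemidef.of_dotProduct_mulVec_nonneg ?_ ?_
  · have := hM.1
    unfold Matrix.IsHermitian at *
    rw [conjTranspose_smul, this, Complex.star_def, Complex.conj_ofReal]
  · intro x
    have h := hM.dotProduct_mulVec_nonneg x
    rw [smul_mulVec, dotProduct_smul]
    rw [Complex.le_def] at h ⊢
    constructor
    · simp only [Complex.zero_re, smul_eq_mul, Complex.mul_re, Complex.ofReal_re,
        Complex.ofReal_im, zero_mul, sub_zero]
      exact mul_nonneg hr (by simpa using h.1)
    · simp only [Complex.zero_im, smul_eq_mul, Complex.mul_im, Complex.ofReal_re,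
        Complex.ofReal_im, zero_mul, add_zero]
      rw [← h.2]; simp

lemma pd_smul {M : Matrix (Fin n) (Fin n) ℂ} (hM : M.PosDef) {r : ℝ} (hr : 0 < r) :
    (((r : ℂ)) • M).PosDef := by
  refine Matrix.PosDef.of_dotProduct_mulVec_pos (psd_smul hM.posSemidef hr.le).1 fun x hx => ?_
  have h := hM.dotProduct_mulVec_pos hx
  rw [smul_mulVec, dotProduct_smul]
  rw [Complex.lt_def] at h ⊢
  constructor
  · simp only [Complex.zero_re, smul_eq_mul, Complex.mul_re, Complex.ofReal_re,
      Complex.ofReal_im, zero_mul, sub_zero]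
    exact mul_pos hr (by simpa using h.1)
  · simp only [Complex.zero_im, smul_eq_mul, Complex.mul_im, Complex.ofReal_re,
      Complex.ofReal_im, zero_mul, add_zero]
    rw [← h.2]; simp

lemma psd_diag_nonneg {M : Matrix (Fin n) (Fin n) ℂ} (hM : M.PosSemidef) (i : Fin n) :
    0 ≤ M i i := by
  have h := hM.dotProduct_mulVec_nonneg (Pi.single i 1)
  simpa [dotProduct, Matrix.mulVec_single, Pi.single_apply, apply_ite, ite_mul,
    Finset.sum_ite_eq'] using h

lemma psd_trace_nonneg {M : Matrix (Fin n) (Fin n) ℂ} (hM : M.PosSemidef) :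
    0 ≤ M.trace := by
  rw [Matrix.trace]
  exact Finset.sum_nonneg fun i _ => psd_diag_nonneg hM i

lemma psd_trace_mul_nonneg {P Q : Matrix (Fin n) (Fin n) ℂ} (hP : P.PosSemidef)
    (hQ : Q.PosSemidef) : 0 ≤ (P * Q).trace := by
  have h1 : P = hP.sqrt * hP.sqrt := hP.sqrt_mul_self.symm
  have h2 : (P * Q).trace = (hP.sqrt * Q * hP.sqrt).trace := by
    conv_lhs => rw [h1]
    rw [Matrix.mul_assoc, Matrix.trace_mul_comm, Matrix.mul_assoc]
  rw [h2]
  exact psd_trace_nonneg (sandwich_posSemidef hP.posSemidef_sqrt.isHermitian hQ)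

lemma posDef_of_det {M : Matrix (Fin n) (Fin n) ℂ} (hM : M.PosSemidef) (h : M.det ≠ 0) :
    M.PosDef := by
  refine Matrix.PosDef.of_dotProduct_mulVec_pos hM.1 fun x hx =>
    lt_of_le_of_ne (hM.dotProduct_mulVec_nonneg x) fun h0 => ?_
  have hz : M *ᵥ x = 0 := (hM.dotProduct_mulVec_zero_iff x).mp h0.symm
  exact h (Matrix.exists_mulVec_eq_zero_iff.mp ⟨x, hx, hz⟩)

lemma charpoly_eval' (M : Matrix (Fin n) (Fin n) ℂ) (z : ℂ) :
    M.charpoly.eval z = (z • (1 : Matrix (Fin n) (Fin n) ℂ) - M).det := by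
  have : M.charpoly.eval z = (Polynomial.evalRingHom z) M.charpoly := rfl
  rw [this, Matrix.charpoly, RingHom.map_det]
  congr 1
  ext i j
  by_cases hij : i = j
  · subst hij
    simp [Matrix.charmatrix_apply_eq, Matrix.one_apply]
  · simp [Matrix.charmatrix_apply_ne _ _ _ hij, Matrix.one_apply, hij]

lemma mem_spectrum_iff' {M : Matrix (Fin n) (Fin n) ℂ} {z : ℂ} :
    z ∈ spectrum ℂ M ↔ ¬ IsUnit (z • (1 : Matrix (Fin n) (Fin n) ℂ) - M) := by
  rw [spectrum.mem_iff, Algebra.algebraMap_eq_smul_one]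

lemma hasPosSpectrum_mul {P Q : Matrix (Fin n) (Fin n) ℂ} (hP : P.PosDef) (hQ : Q.PosDef) :
    HasPosSpectrum (P * Q) := by
  intro z hz
  rw [mem_spectrum_iff', Matrix.isUnit_iff_isUnit_det, isUnit_iff_ne_zero, not_not] at hz
  obtain ⟨v, hv, hev⟩ := Matrix.exists_mulVec_eq_zero_iff.mpr hz
  have heq : (P * Q) *ᵥ v = z • v := by
    have : (z • (1 : Matrix (Fin n) (Fin n) ℂ) - P * Q) *ᵥ v = 0 := hev
    rw [Matrix.sub_mulVec, smul_mulVec, Matrix.one_mulVec, sub_eq_zero] at this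
    exact this.symm
  have key : star v ⬝ᵥ (Q *ᵥ ((P * Q) *ᵥ v)) = z * (star v ⬝ᵥ (Q *ᵥ v)) := by
    rw [heq, Matrix.mulVec_smul, dotProduct_smul, smul_eq_mul]
  have hQv : Q *ᵥ v ≠ 0 := by
    intro h0
    exact hv (Matrix.eq_zero_of_mulVec_eq_zero (hQ.det_pos.ne') h0)
  have hlhs : star v ⬝ᵥ (Q *ᵥ ((P * Q) *ᵥ v)) = star (Q *ᵥ v) ⬝ᵥ (P *ᵥ (Q *ᵥ v)) := by
    rw [← Matrix.mulVec_mulVec, Matrix.dotProduct_mulVec (star v) Q]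
    congr 1
    rw [← hQ.1.eq, ← Matrix.star_mulVec, hQ.1.eq]
  have h1 : 0 < star (Q *ᵥ v) ⬝ᵥ (P *ᵥ (Q *ᵥ v)) := hP.dotProduct_mulVec_pos hQv
  have h2 : 0 < star v ⬝ᵥ (Q *ᵥ v) := hQ.dotProduct_mulVec_pos hv
  rw [hlhs] at key
  rw [Complex.lt_def] at h1 h2
  simp only [Complex.zero_re, Complex.zero_im] at h1 h2
  have him : (z * (star v ⬝ᵥ (Q *ᵥ v))).im = 0 := by rw [← key, ← h1.2]
  have hre : 0 < (z * (star v ⬝ᵥ (Q *ᵥ v))).re := by rw [← key]; exact h1.1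
  rw [Complex.mul_im] at him
  rw [Complex.mul_re] at hre
  rw [← h2.2] at him hre
  simp only [mul_zero, zero_add, sub_zero] at him hre
  have hzim : z.im = 0 := by
    rcases mul_eq_zero.mp him with h | h
    · exact h
    · exact absurd h h2.1.ne'
  exact ⟨by nlinarith [h2.1], hzim⟩

lemma principal_sqrt_unique {S₁ S₂ : Matrix (Fin n) (Fin n) ℂ}
    (hsq : S₁ * S₁ = S₂ * S₂) (h1 : HasPosSpectrum S₁) (h2 : HasPosSpectrum S₂) :
    S₁ = S₂ := by
  set Δ := S₁ - S₂ with hΔ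
  have hstep : S₁ * Δ = Δ * (-S₂) := by
    rw [hΔ]
    simp only [Matrix.mul_sub, Matrix.sub_mul, Matrix.mul_neg]
    rw [hsq]; noncomm_ring
  have hpow : ∀ m : ℕ, S₁ ^ m * Δ = Δ * (-S₂) ^ m := by
    intro m
    induction m with
    | zero => simp
    | succ m ih =>
      rw [pow_succ', Matrix.mul_assoc, ih, ← Matrix.mul_assoc, hstep, Matrix.mul_assoc,
        ← pow_succ']
  have hpoly : ∀ p : Polynomial ℂ, (Polynomial.aeval S₁ p) * Δ = Δ * (Polynomial.aeval (-S₂) p) := by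
    intro p
    induction p using Polynomial.induction_on' with
    | add p q hp hq => simp only [map_add, Matrix.add_mul, Matrix.mul_add, hp, hq]
    | monomial m a =>
      simp only [Polynomial.aeval_monomial, Algebra.algebraMap_eq_smul_one]
      rw [Matrix.mul_assoc]
      simp only [smul_mul_assoc, Matrix.one_mul, mul_smul_comm]
      rw [hpow m]
  have hch := hpoly S₁.charpoly
  rw [Matrix.aeval_self_charpoly, Matrix.zero_mul] at hch
  have hunit : IsUnit (Polynomial.aeval (-S₂) S₁.charpoly) := by
    by_contra hnu
    have hmonic := S₁.charpoly_monic
    have hfact := (IsAlgClosed.splits S₁.charpoly).eq_prod_roots_of_monic hmonic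
    rw [hfact] at hnu
    obtain ⟨k, hk, hkroot⟩ := spectrum.exists_mem_of_not_isUnit_aeval_prod hnu
    have hks : -k ∈ spectrum ℂ S₂ := by
      rw [mem_spectrum_iff']
      rw [spectrum.mem_iff, Algebra.algebraMap_eq_smul_one] at hk
      intro hu
      apply hk
      have : k • (1 : Matrix (Fin n) (Fin n) ℂ) - -S₂ = -((-k) • 1 - S₂) := by
        rw [neg_smul]; noncomm_ring
      rw [this]
      exact hu.neg
    have hk2 := h2 _ hks
    have hks1 : k ∈ spectrum ℂ S₁ := by
      rw [mem_spectrum_iff', Matrix.isUnit_iff_isUnit_det, isUnit_iff_ne_zero, not_not,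
        ← charpoly_eval']
      exact hkroot
    have hk1 := h1 _ hks1
    simp only [Complex.neg_re] at hk2
    linarith [hk1.1, hk2.1]
  obtain ⟨u, hu⟩ := hunit.exists_right_inv
  have hΔ0 : Δ = 0 := by
    calc Δ = Δ * ((Polynomial.aeval (-S₂) S₁.charpoly) * u) := by rw [hu, Matrix.mul_one]
    _ = (Δ * Polynomial.aeval (-S₂) S₁.charpoly) * u := by rw [Matrix.mul_assoc]
    _ = 0 := by rw [← hch]; simp
  rw [← sub_eq_zero]
  exact hΔ0

lemma sqrt_det_ne_zero {M : Matrix (Fin n) (Fin n) ℂ} (hM : M.PosDef) :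
    (hM.posSemidef.sqrt).det ≠ 0 := by
  intro h
  have := hM.posSemidef.sqrt_mul_self
  have hdet : M.det = 0 := by
    rw [← this, Matrix.det_mul, h, mul_zero]
  exact hM.det_pos.ne' hdet

lemma geomMean_riccati {A B : Matrix (Fin n) (Fin n) ℂ} (hA : A.PosDef) (hB : B.PosDef) :
    geomMean hA hB * A⁻¹ * geomMean hA hB = B := by
  set s := hA.posSemidef.sqrt with hs
  have hss : s * s = A := hA.posSemidef.sqrt_mul_self
  have hdet : IsUnit s.det := isUnit_iff_ne_zero.mpr (sqrt_det_ne_zero hA)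
  set R := (sandwich_posSemidef hA.posSemidef.posSemidef_sqrt.isHermitian.inv
        hB.posSemidef).sqrt with hR
  have hRR : R * R = s⁻¹ * B * s⁻¹ :=
    (sandwich_posSemidef hA.posSemidef.posSemidef_sqrt.isHermitian.inv
        hB.posSemidef).sqrt_mul_self
  have hAinv : A⁻¹ = s⁻¹ * s⁻¹ := by
    rw [← hss, Matrix.mul_inv_rev]
  have hcan : s * s⁻¹ = 1 := Matrix.mul_nonsing_inv s hdet
  have hcan' : s⁻¹ * s = 1 := Matrix.nonsing_inv_mul s hdet
  show (s * R * s) * A⁻¹ * (s * R * s) = B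
  rw [hAinv]
  calc (s * R * s) * (s⁻¹ * s⁻¹) * (s * R * s)
      = s * R * (s * s⁻¹) * (s⁻¹ * s) * R * s := by
        simp only [Matrix.mul_assoc]
    _ = s * (R * R) * s := by rw [hcan, hcan']; simp only [Matrix.mul_one, Matrix.mul_assoc]
    _ = s * (s⁻¹ * B * s⁻¹) * s := by rw [hRR]
    _ = (s * s⁻¹) * B * (s⁻¹ * s) := by simp only [Matrix.mul_assoc]
    _ = B := by rw [hcan, hcan']; simp

lemma geomMean_inv_riccati {A B : Matrix (Fin n) (Fin n) ℂ} (hA : A.PosDef) (hB : B.PosDef) :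
    geomMean hA.inv hB * A * geomMean hA.inv hB = B := by
  have := geomMean_riccati hA.inv hB
  rwa [Matrix.nonsing_inv_nonsing_inv A (isUnit_iff_ne_zero.mpr hA.det_pos.ne')] at this

lemma geomMean_inv_posDef {A B : Matrix (Fin n) (Fin n) ℂ} (hA : A.PosDef) (hB : B.PosDef) :
    (geomMean hA.inv hB).PosDef := by
  apply posDef_of_det (geomMean_posSemidef hA.inv hB)
  intro h
  have := geomMean_inv_riccati hA hB
  have hdetB : B.det = 0 := by
    rw [← this, Matrix.det_mul, Matrix.det_mul, h]
    ring
  exact hB.det_pos.ne' hdetB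

lemma exists_top_subset (μ : Fin n → ℝ) (k : ℕ) (hk : k ≤ n) :
    ∃ t : Finset (Fin n), t.card = k ∧ ∀ i ∈ t, ∀ j ∉ t, μ j ≤ μ i := by
  classical
  have hne : (Finset.univ.powersetCard k (α := Fin n)).Nonempty := by
    apply Finset.powersetCard_nonempty.mpr
    simpa using hk
  obtain ⟨t, ht, hmax⟩ := Finset.exists_max_image _ (fun t => ∑ i ∈ t, μ i) hne
  rw [Finset.mem_powersetCard] at ht
  refine ⟨t, ht.2, fun i hi j hj => ?_⟩
  by_contra hlt
  push_neg at hlt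
  set t' := insert j (t.erase i) with ht'
  have hjne : j ∉ t.erase i := fun h => hj (Finset.mem_of_mem_erase h)
  have hcard' : t'.card = k := by
    rw [ht', Finset.card_insert_of_notMem hjne, Finset.card_erase_of_mem hi, ht.2]
    have : 1 ≤ k := by
      rw [← ht.2]
      exact Finset.card_pos.mpr ⟨i, hi⟩
    omega
  have ht'mem : t' ∈ Finset.univ.powersetCard k := by
    rw [Finset.mem_powersetCard]
    exact ⟨Finset.subset_univ _, hcard'⟩
  have hsum' : ∑ x ∈ t', μ x = μ j + (∑ x ∈ t, μ x - μ i) := by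
    rw [ht', Finset.sum_insert hjne]
    congr 1
    rw [Finset.sum_erase_eq_sub hi]
  have := hmax t' ht'mem
  rw [hsum'] at this
  linarith

lemma sum_le_top (μ d : Fin n → ℝ) (hμ0 : ∀ j, 0 ≤ μ j) (hd0 : ∀ j, 0 ≤ d j)
    (hd1 : ∀ j, d j ≤ 1) (k : ℕ) (hk : k ≤ n) (hsum : ∑ j, d j ≤ k) :
    ∃ t : Finset (Fin n), t.card = k ∧ ∑ j, μ j * d j ≤ ∑ i ∈ t, μ i := by
  classical
  obtain ⟨t, htc, htop⟩ := exists_top_subset μ k hk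
  refine ⟨t, htc, ?_⟩
  rcases Nat.eq_zero_or_pos k with hk0 | hkpos
  · subst hk0
    have ht0 : t = ∅ := Finset.card_eq_zero.mp htc
    have hdz : ∀ j, d j = 0 := by
      have hzero : ∑ j, d j = 0 :=
        le_antisymm (by simpa using hsum) (Finset.sum_nonneg fun j _ => hd0 j)
      intro j
      have := (Finset.sum_eq_zero_iff_of_nonneg (fun j _ => hd0 j)).mp hzero
      exact this j (Finset.mem_univ j)
    simp [ht0, hdz]
  · have htne : t.Nonempty := Finset.card_pos.mp (htc ▸ hkpos)
    obtain ⟨i₀, hi₀, hmin⟩ := Finset.exists_min_image t μ htne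
    set m := μ i₀ with hm
    have hm0 : 0 ≤ m := hμ0 i₀
    have hout : ∀ j ∉ t, μ j ≤ m := fun j hj => htop i₀ hi₀ j hj
    have hsplit : ∑ j, μ j * d j = ∑ j ∈ t, μ j * d j + ∑ j ∈ tᶜ, μ j * d j := by
      rw [Finset.sum_add_sum_compl]
    have hcompl : ∑ j ∈ tᶜ, μ j * d j ≤ m * ∑ j ∈ tᶜ, d j := by
      rw [Finset.mul_sum]
      apply Finset.sum_le_sum
      intro j hj
      have hjt : j ∉ t := by simpa using hj
      exact mul_le_mul_of_nonneg_right (hout j hjt) (hd0 j)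
    have hcsum : ∑ j ∈ tᶜ, d j ≤ k - ∑ j ∈ t, d j := by
      have : ∑ j ∈ t, d j + ∑ j ∈ tᶜ, d j = ∑ j, d j := Finset.sum_add_sum_compl t d
      linarith
    have h2 : m * ∑ j ∈ tᶜ, d j ≤ m * (k - ∑ j ∈ t, d j) :=
      mul_le_mul_of_nonneg_left hcsum hm0
    have h3 : m * ((k : ℝ) - ∑ j ∈ t, d j) = ∑ i ∈ t, m * (1 - d i) := by
      have hcast : (k : ℝ) = ∑ _i ∈ t, (1 : ℝ) := by
        rw [Finset.sum_const, ← htc]; simp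
      rw [hcast, ← Finset.sum_sub_distrib, Finset.mul_sum]
    have h4 : ∑ i ∈ t, m * (1 - d i) ≤ ∑ i ∈ t, μ i * (1 - d i) := by
      apply Finset.sum_le_sum
      intro i hi
      exact mul_le_mul_of_nonneg_right (hmin i hi) (by linarith [hd1 i])
    have h5 : ∑ j ∈ t, μ j * d j + ∑ i ∈ t, μ i * (1 - d i) = ∑ i ∈ t, μ i := by
      rw [← Finset.sum_add_distrib]
      apply Finset.sum_congr rfl
      intro i _
      ring
    linarith

lemma exists_proj_trace {H : Matrix (Fin n) (Fin n) ℂ} (hH : H.IsHermitian)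
    (s : Finset (Fin n)) :
    ∃ P : Matrix (Fin n) (Fin n) ℂ, P.PosSemidef ∧ (1 - P).PosSemidef ∧
      P.trace = (s.card : ℂ) ∧
      (P * H).trace = ((∑ i ∈ s, hH.eigenvalues i : ℝ) : ℂ) := by
  classical
  set U : Matrix (Fin n) (Fin n) ℂ := (hH.eigenvectorUnitary : Matrix (Fin n) (Fin n) ℂ) with hU
  have hU1 : star U * U = 1 := hH.eigenvectorUnitary.2.1
  have hU2 : U * star U = 1 := hH.eigenvectorUnitary.2.2
  set χ : Matrix (Fin n) (Fin n) ℂ := diagonal (fun i => if i ∈ s then 1 else 0) with hχ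
  set P := U * χ * star U with hP
  have hχpsd : χ.PosSemidef := by
    apply Matrix.PosSemidef.diagonal
    intro i
    by_cases h : i ∈ s <;> simp [h]
  have hχ1 : ((1 : Matrix (Fin n) (Fin n) ℂ) - χ).PosSemidef := by
    have : (1 : Matrix (Fin n) (Fin n) ℂ) - χ = diagonal (fun i => if i ∈ s then 0 else 1) := by
      ext i j
      rcases eq_or_ne i j with rfl | hij
      · by_cases h : i ∈ s <;>
          simp [hχ, Matrix.sub_apply, Matrix.diagonal_apply_eq, Matrix.one_apply_eq, h]
      · simp [hχ, Matrix.sub_apply, Matrix.diagonal_apply_ne _ hij, Matrix.one_apply_ne hij]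
    rw [this]
    apply Matrix.PosSemidef.diagonal
    intro i
    by_cases h : i ∈ s <;> simp [h]
  have hPpsd : P.PosSemidef := by
    have h := hχpsd.mul_mul_conjTranspose_same U
    rw [hP]
    simpa [Matrix.star_eq_conjTranspose] using h
  have h1P : (1 : Matrix (Fin n) (Fin n) ℂ) - P = U * (1 - χ) * star U := by
    rw [Matrix.mul_sub, Matrix.sub_mul, Matrix.mul_one, hU2, hP]
  have h1Ppsd : ((1 : Matrix (Fin n) (Fin n) ℂ) - P).PosSemidef := by
    rw [h1P]
    have h := hχ1.mul_mul_conjTranspose_same U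
    simpa [Matrix.star_eq_conjTranspose] using h
  have htrP : P.trace = (s.card : ℂ) := by
    rw [hP, Matrix.trace_mul_comm, ← Matrix.mul_assoc, hU1, Matrix.one_mul, hχ,
      Matrix.trace_diagonal]
    simp [Finset.sum_ite_mem]
  refine ⟨P, hPpsd, h1Ppsd, htrP, ?_⟩
  have hspec := hH.spectral_theorem
  rw [Unitary.conjStarAlgAut_apply] at hspec
  set Λ : Matrix (Fin n) (Fin n) ℂ := diagonal (RCLike.ofReal ∘ hH.eigenvalues) with hΛ
  have hPH : P * H = U * (χ * Λ) * star U := by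
    conv_lhs => rw [hspec]
    rw [hP]
    calc U * χ * star U * (U * Λ * star U)
        = U * χ * (star U * U) * Λ * star U := by simp only [Matrix.mul_assoc]
      _ = U * (χ * Λ) * star U := by rw [hU1]; simp only [Matrix.mul_one, Matrix.mul_assoc]
  rw [hPH, Matrix.trace_mul_comm, ← Matrix.mul_assoc, hU1, Matrix.one_mul]
  rw [hχ, hΛ, Matrix.diagonal_mul_diagonal, Matrix.trace_diagonal]
  have hstep : ∀ i : Fin n, (if i ∈ s then (1:ℂ) else 0) * (RCLike.ofReal ∘ hH.eigenvalues) i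
      = if i ∈ s then ((hH.eigenvalues i : ℝ) : ℂ) else 0 := by
    intro i
    by_cases h : i ∈ s <;> simp [h]
  simp only [hstep]
  rw [Finset.sum_ite_mem, Finset.univ_inter]
  push_cast
  rfl

lemma trace_mul_le_top {W : Matrix (Fin n) (Fin n) ℂ} (hW : W.IsHermitian)
    (hWpsd : W.PosSemidef) {Θ : Matrix (Fin n) (Fin n) ℂ} (hΘ : Θ.PosSemidef)
    (hΘ1 : ((1 : Matrix (Fin n) (Fin n) ℂ) - Θ).PosSemidef) (k : ℕ) (hk : k ≤ n)
    (htr : (Θ.trace).re ≤ k) :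
    ∃ t : Finset (Fin n), t.card = k ∧ ((Θ * W).trace).re ≤ ∑ i ∈ t, hW.eigenvalues i := by
  classical
  set U : Matrix (Fin n) (Fin n) ℂ := (hW.eigenvectorUnitary : Matrix (Fin n) (Fin n) ℂ)
    with hU
  have hU1 : star U * U = 1 := hW.eigenvectorUnitary.2.1
  have hU2 : U * star U = 1 := hW.eigenvectorUnitary.2.2
  set Λ : Matrix (Fin n) (Fin n) ℂ := diagonal (RCLike.ofReal ∘ hW.eigenvalues) with hΛ
  set D : Matrix (Fin n) (Fin n) ℂ := star U * Θ * U with hD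
  have hDpsd : D.PosSemidef := by
    have h := hΘ.conjTranspose_mul_mul_same U
    rw [hD]
    simpa [Matrix.star_eq_conjTranspose] using h
  have h1D : (1 : Matrix (Fin n) (Fin n) ℂ) - D = star U * (1 - Θ) * U := by
    rw [Matrix.mul_sub, Matrix.sub_mul, Matrix.mul_one, hU1, hD]
  have h1Dpsd : ((1 : Matrix (Fin n) (Fin n) ℂ) - D).PosSemidef := by
    rw [h1D]
    have h := hΘ1.conjTranspose_mul_mul_same U
    simpa [Matrix.star_eq_conjTranspose] using h
  have htrD : D.trace = Θ.trace := by
    rw [hD, Matrix.trace_mul_comm, ← Matrix.mul_assoc, hU2, Matrix.one_mul]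
  have htrace : (Θ * W).trace = ∑ j, D j j * ((hW.eigenvalues j : ℝ) : ℂ) := by
    have hspec := hW.spectral_theorem
    rw [Unitary.conjStarAlgAut_apply] at hspec
    have hΘW : (Θ * W).trace = (D * Λ).trace := by
      conv_lhs => rw [hspec]
      calc (Θ * (U * Λ * star U)).trace
          = ((Θ * U * Λ) * star U).trace := by simp only [Matrix.mul_assoc]
        _ = (star U * (Θ * U * Λ)).trace := by rw [Matrix.trace_mul_comm]
        _ = (D * Λ).trace := by rw [hD]; simp only [Matrix.mul_assoc]
    rw [hΘW, Matrix.trace]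
    apply Finset.sum_congr rfl
    intro j _
    rw [Matrix.diag_apply, Matrix.mul_diagonal]
    rfl
  set d : Fin n → ℝ := fun j => (D j j).re with hd
  have hd0 : ∀ j, 0 ≤ d j := by
    intro j
    have := psd_diag_nonneg hDpsd j
    rw [Complex.le_def] at this
    simpa using this.1
  have hd1 : ∀ j, d j ≤ 1 := by
    intro j
    have := psd_diag_nonneg h1Dpsd j
    rw [Complex.le_def] at this
    have h1 := this.1
    simp only [Matrix.sub_apply, Matrix.one_apply_eq, Complex.zero_re, Complex.sub_re,
      Complex.one_re] at h1
    simp only [hd]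
    linarith
  have hdsum : ∑ j, d j ≤ k := by
    have : ∑ j, d j = (D.trace).re := by
      rw [Matrix.trace, Complex.re_sum]
      rfl
    rw [this, htrD]
    exact htr
  obtain ⟨t, htc, hle⟩ := sum_le_top hW.eigenvalues d
    (fun j => hWpsd.eigenvalues_nonneg j) hd0 hd1 k hk hdsum
  refine ⟨t, htc, ?_⟩
  have hre : ((Θ * W).trace).re = ∑ j, hW.eigenvalues j * d j := by
    rw [htrace, Complex.re_sum]
    apply Finset.sum_congr rfl
    intro j _
    rw [Complex.mul_re]
    simp [hd, mul_comm]
  rw [hre]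
  exact hle

lemma eig_eq_of_eq {M N : Matrix (Fin n) (Fin n) ℂ} (hM : M.IsHermitian) (hN : N.IsHermitian)
    (h : M = N) : hM.eigenvalues = hN.eigenvalues := by
  subst h; rfl

lemma weakMaj_refl (x : Fin n → ℝ) : WeakMaj x x := fun s => ⟨s, rfl, le_refl _⟩

/-- the sharp spectral Heron–Wasserstein comparison:
`a²A + b²B + c(A ♮ B) ≺_w W_{a,b}(A,B)` for `0 ≤ c ≤ 2ab`. -/
theorem spectral_heron_wasserstein {n : ℕ} (A B S T : Matrix (Fin n) (Fin n) ℂ)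
    (hA : A.PosDef) (hB : B.PosDef)
    (a b c : ℝ) (ha : 0 ≤ a) (hb : 0 ≤ b) (hc0 : 0 ≤ c) (hc : c ≤ 2 * a * b)
    (hS : IsPrincipalSqrt (A * B) S) (hT : IsPrincipalSqrt (B * A) T)
    (hH : (((a : ℂ) ^ 2) • A + ((b : ℂ) ^ 2) • B
        + (c : ℂ) • specMean hA hB).IsHermitian)
    (hW : (((a : ℂ) ^ 2) • A + ((b : ℂ) ^ 2) • B
        + ((a : ℂ) * b) • (S + T)).IsHermitian) :
    WeakMaj hH.eigenvalues hW.eigenvalues := by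
  classical
  by_cases hab : a = 0 ∨ b = 0
  · have hab0 : a * b = 0 := by
      rcases hab with h | h <;> rw [h] <;> ring
    have hc0' : c = 0 := le_antisymm (by nlinarith) hc0
    have heq : (((a : ℂ) ^ 2) • A + ((b : ℂ) ^ 2) • B + (c : ℂ) • specMean hA hB)
        = (((a : ℂ) ^ 2) • A + ((b : ℂ) ^ 2) • B + ((a : ℂ) * b) • (S + T)) := by
      have : ((a : ℂ) * b) = 0 := by exact_mod_cast hab0
      rw [hc0', this]
      push_cast
      simp
    rw [eig_eq_of_eq hH hW heq]
    exact weakMaj_refl _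
  push_neg at hab
  have ha' : 0 < a := lt_of_le_of_ne ha (Ne.symm hab.1)
  have hb' : 0 < b := lt_of_le_of_ne hb (Ne.symm hab.2)
  -- the geometric mean X = A⁻¹ # B and its square root Y
  set X := geomMean hA.inv hB with hXdef
  have hXpsd : X.PosSemidef := geomMean_posSemidef hA.inv hB
  have hXpd : X.PosDef := geomMean_inv_posDef hA hB
  have hXAX : X * A * X = B := geomMean_inv_riccati hA hB
  set Y := (geomMean_posSemidef hA.inv hB).sqrt with hYdef
  have hYY : Y * Y = X := (geomMean_posSemidef hA.inv hB).sqrt_mul_self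
  have hYherm : Y.IsHermitian := (geomMean_posSemidef hA.inv hB).posSemidef_sqrt.isHermitian
  have hXherm : X.IsHermitian := hXpsd.isHermitian
  have hFdef : specMean hA hB = Y * A * Y := rfl
  -- identify S and T
  have hSAX : S = A * X := by
    apply principal_sqrt_unique _ hS.2 (hasPosSpectrum_mul hA hXpd)
    rw [hS.1, ← hXAX]
    noncomm_ring
  have hTXA : T = X * A := by
    apply principal_sqrt_unique _ hT.2 (hasPosSpectrum_mul hXpd hA)
    rw [hT.1, ← hXAX]
    noncomm_ring
  -- N = a•1 + b•X
  set N : Matrix (Fin n) (Fin n) ℂ := (a : ℂ) • 1 + (b : ℂ) • X with hNdef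
  have hNpd : N.PosDef := by
    apply Matrix.PosDef.add_posSemidef (pd_smul Matrix.PosDef.one ha')
    exact psd_smul hXpsd hb
  have hNherm : N.IsHermitian := hNpd.isHermitian
  set K : Matrix (Fin n) (Fin n) ℂ := N⁻¹ with hKdef
  have hKherm : K.IsHermitian := hNpd.inv.isHermitian
  have hNunit : IsUnit N.det := isUnit_iff_ne_zero.mpr hNpd.det_pos.ne'
  have hKN : K * N = 1 := Matrix.nonsing_inv_mul N hNunit
  have hNK : N * K = 1 := Matrix.mul_nonsing_inv N hNunit
  -- commutation relations
  have hXN : X * N = N * X := by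
    rw [hNdef]
    simp only [Matrix.mul_add, Matrix.add_mul, mul_smul_comm, smul_mul_assoc,
      Matrix.mul_one, Matrix.one_mul]
  have hYX : Y * X = X * Y := by
    rw [← hYY, ← Matrix.mul_assoc, Matrix.mul_assoc]
  have hYN : Y * N = N * Y := by
    rw [hNdef]
    simp only [Matrix.mul_add, Matrix.add_mul, mul_smul_comm, smul_mul_assoc,
      Matrix.mul_one, Matrix.one_mul, hYX]
  have hcomm_inv : ∀ M : Matrix (Fin n) (Fin n) ℂ, M * N = N * M → M * K = K * M := by
    intro M hMN
    have e1 : K * (M * N) * K = K * M := by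
      calc K * (M * N) * K = (K * M) * (N * K) := by simp only [Matrix.mul_assoc]
        _ = K * M := by rw [hNK, Matrix.mul_one]
    have e2 : K * (N * M) * K = M * K := by
      calc K * (N * M) * K = (K * N) * (M * K) := by simp only [Matrix.mul_assoc]
        _ = M * K := by rw [hKN, Matrix.one_mul]
    have h := congrArg (fun W => K * W * K) hMN
    rw [e1, e2] at h
    exact h.symm
  have hXK : X * K = K * X := hcomm_inv X hXN
  have hYK : Y * K = K * Y := hcomm_inv Y hYN
  -- W = N * A * N
  have hWNAN : (((a : ℂ) ^ 2) • A + ((b : ℂ) ^ 2) • B + ((a : ℂ) * b) • (S + T))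
      = N * A * N := by
    rw [hSAX, hTXA, ← hXAX, hNdef]
    simp only [Matrix.mul_add, Matrix.add_mul, mul_smul_comm, smul_mul_assoc,
      Matrix.mul_one, Matrix.one_mul, smul_add]
    module
  have hWpsd : (((a : ℂ) ^ 2) • A + ((b : ℂ) ^ 2) • B + ((a : ℂ) * b) • (S + T)).PosSemidef := by
    rw [hWNAN]
    exact sandwich_posSemidef hNherm hA.posSemidef
  -- H in terms of A, X, Y
  have hHmat : (((a : ℂ) ^ 2) • A + ((b : ℂ) ^ 2) • B + (c : ℂ) • specMean hA hB)
      = ((a : ℂ) ^ 2) • A + ((b : ℂ) ^ 2) • (X * A * X) + (c : ℂ) • (Y * A * Y) := by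
    rw [hFdef, hXAX]
  -- the eigen-projection for s
  intro s
  obtain ⟨P, hPpsd, h1Ppsd, htrP, htrPH⟩ := exists_proj_trace hH s
  -- the dual operator Θ
  set Z : Matrix (Fin n) (Fin n) ℂ :=
    ((a : ℂ) ^ 2) • P + ((b : ℂ) ^ 2) • (X * P * X) + (c : ℂ) • (Y * P * Y) with hZdef
  set Θ : Matrix (Fin n) (Fin n) ℂ := K * Z * K with hΘdef
  have ha2cast : ((a : ℂ) ^ 2) = ((a ^ 2 : ℝ) : ℂ) := by push_cast; ring
  have hb2cast : ((b : ℂ) ^ 2) = ((b ^ 2 : ℝ) : ℂ) := by push_cast; ring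
  have hZpsd : Z.PosSemidef := by
    rw [hZdef, ha2cast, hb2cast]
    apply Matrix.PosSemidef.add
    apply Matrix.PosSemidef.add
    · exact psd_smul hPpsd (sq_nonneg a)
    · exact psd_smul (sandwich_posSemidef hXherm hPpsd) (sq_nonneg b)
    · exact psd_smul (sandwich_posSemidef hYherm hPpsd) hc0
  have hΘpsd : Θ.PosSemidef := by
    rw [hΘdef]
    exact sandwich_posSemidef hKherm hZpsd
  -- N * N expansion
  have hNN : N * N = ((a : ℂ) ^ 2) • 1 + ((2 * a * b : ℝ) : ℂ) • X + ((b : ℂ) ^ 2) • (X * X) := by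
    rw [hNdef]
    simp only [Matrix.mul_add, Matrix.add_mul, mul_smul_comm, smul_mul_assoc,
      Matrix.mul_one, Matrix.one_mul]
    push_cast
    module
  -- decomposition of N*N - Z as a sum of PSD matrices
  have hdecomp : N * N - Z = ((a : ℂ) ^ 2) • (1 - P) + ((b : ℂ) ^ 2) • (X * (1 - P) * X)
      + ((2 * a * b - c : ℝ) : ℂ) • X + (c : ℂ) • (Y * (1 - P) * Y) := by
    rw [hNN, hZdef]
    simp only [Matrix.mul_sub, Matrix.sub_mul, Matrix.mul_one, Matrix.one_mul, hYY]
    push_cast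
    module
  have hNNZpsd : (N * N - Z).PosSemidef := by
    rw [hdecomp, ha2cast, hb2cast]
    apply Matrix.PosSemidef.add
    apply Matrix.PosSemidef.add
    apply Matrix.PosSemidef.add
    · exact psd_smul h1Ppsd (sq_nonneg a)
    · exact psd_smul (sandwich_posSemidef hXherm h1Ppsd) (sq_nonneg b)
    · exact psd_smul hXpsd (by linarith)
    · exact psd_smul (sandwich_posSemidef hYherm h1Ppsd) hc0
  have hΘ1 : ((1 : Matrix (Fin n) (Fin n) ℂ) - Θ).PosSemidef := by
    have h1 : (1 : Matrix (Fin n) (Fin n) ℂ) = K * (N * N) * K := by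
      calc (1 : Matrix (Fin n) (Fin n) ℂ) = (K * N) * (N * K) := by rw [hKN, hNK, Matrix.one_mul]
        _ = K * (N * N) * K := by simp only [Matrix.mul_assoc]
    have h2 : (1 : Matrix (Fin n) (Fin n) ℂ) - Θ = K * (N * N - Z) * K := by
      rw [h1, hΘdef, Matrix.mul_sub, Matrix.sub_mul]
    rw [h2]
    exact sandwich_posSemidef hKherm hNNZpsd
  -- cyclic trace helper
  have cyc3 : ∀ M A' : Matrix (Fin n) (Fin n) ℂ, M.IsHermitian →
      (M * P * M * A').trace = (P * (M * A' * M)).trace := by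
    intro M A' _
    calc (M * P * M * A').trace = ((M * P) * (M * A')).trace := by
          simp only [Matrix.mul_assoc]
      _ = ((M * A') * (M * P)).trace := Matrix.trace_mul_comm _ _
      _ = (((M * A') * M) * P).trace := by simp only [Matrix.mul_assoc]
      _ = (P * ((M * A') * M)).trace := Matrix.trace_mul_comm _ _
  -- the key trace identity
  have hE1 : (P * (((a : ℂ) ^ 2) • A + ((b : ℂ) ^ 2) • B + (c : ℂ) • specMean hA hB)).trace
      = (Θ * (((a : ℂ) ^ 2) • A + ((b : ℂ) ^ 2) • B + ((a : ℂ) * b) • (S + T))).trace := by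
    rw [hHmat, hWNAN]
    have hΘW : Θ * (N * A * N) = K * (Z * (A * N)) := by
      rw [hΘdef]
      calc K * Z * K * (N * A * N) = K * (Z * ((K * N) * (A * N))) := by
            simp only [Matrix.mul_assoc]
        _ = K * (Z * (A * N)) := by rw [hKN, Matrix.one_mul]
    rw [hΘW]
    have htr2 : (K * (Z * (A * N))).trace = (Z * A).trace := by
      rw [Matrix.trace_mul_comm]
      calc ((Z * (A * N)) * K).trace = (Z * (A * (N * K))).trace := by
            simp only [Matrix.mul_assoc]
        _ = (Z * A).trace := by rw [hNK, Matrix.mul_one]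
    rw [htr2, hZdef]
    simp only [Matrix.mul_add, Matrix.add_mul, smul_mul_assoc, mul_smul_comm,
      Matrix.trace_add, Matrix.trace_smul]
    rw [cyc3 X A hXherm, cyc3 Y A hYherm]
  -- trace bound for Θ
  have hswap : ∀ M : Matrix (Fin n) (Fin n) ℂ, M * K = K * M →
      M * (K * K) * M = K * (M * M) * K := by
    intro M hMK
    calc M * (K * K) * M = (M * K) * (K * M) := by simp only [Matrix.mul_assoc]
      _ = (K * M) * (K * M) := by rw [hMK]
      _ = (K * M) * (M * K) := congrArg (fun W => (K * M) * W) hMK.symm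
      _ = K * (M * M) * K := by simp only [Matrix.mul_assoc]
  set G₀ : Matrix (Fin n) (Fin n) ℂ :=
    ((a : ℂ) ^ 2) • 1 + ((b : ℂ) ^ 2) • (X * X) + (c : ℂ) • X with hG₀def
  set M₀ : Matrix (Fin n) (Fin n) ℂ := K * G₀ * K with hM₀def
  have htrΘ : Θ.trace = (P * M₀).trace := by
    have e1 : Θ.trace = (Z * (K * K)).trace := by
      rw [hΘdef]
      calc (K * Z * K).trace = (K * (K * Z)).trace := Matrix.trace_mul_comm _ _
        _ = ((K * K) * Z).trace := by simp only [Matrix.mul_assoc]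
        _ = (Z * (K * K)).trace := Matrix.trace_mul_comm _ _
    have e2 : M₀ = ((a : ℂ) ^ 2) • (K * K) + ((b : ℂ) ^ 2) • (K * (X * X) * K)
        + (c : ℂ) • (K * X * K) := by
      rw [hM₀def, hG₀def]
      simp only [Matrix.add_mul, Matrix.mul_add, smul_mul_assoc, mul_smul_comm,
        Matrix.one_mul, Matrix.mul_one, Matrix.mul_assoc]
    rw [e1, hZdef]
    simp only [Matrix.add_mul, smul_mul_assoc, Matrix.trace_add, Matrix.trace_smul]
    rw [cyc3 X (K * K) hXherm, cyc3 Y (K * K) hYherm, hswap X hXK, hswap Y hYK, hYY, e2]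
    simp only [Matrix.mul_add, mul_smul_comm, Matrix.trace_add, Matrix.trace_smul]
  have h1M₀ : ((1 : Matrix (Fin n) (Fin n) ℂ) - M₀).PosSemidef := by
    have h1 : (1 : Matrix (Fin n) (Fin n) ℂ) = K * (N * N) * K := by
      calc (1 : Matrix (Fin n) (Fin n) ℂ) = (K * N) * (N * K) := by rw [hKN, hNK, Matrix.one_mul]
        _ = K * (N * N) * K := by simp only [Matrix.mul_assoc]
    have h2 : N * N - G₀ = ((2 * a * b - c : ℝ) : ℂ) • X := by
      rw [hNN, hG₀def]
      push_cast
      module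
    have h3 : (1 : Matrix (Fin n) (Fin n) ℂ) - M₀ = K * (((2 * a * b - c : ℝ) : ℂ) • X) * K := by
      rw [h1, hM₀def, ← h2, Matrix.mul_sub, Matrix.sub_mul]
    rw [h3]
    exact sandwich_posSemidef hKherm (psd_smul hXpsd (by linarith))
  have htrbound : (Θ.trace).re ≤ (s.card : ℝ) := by
    have e3 : P * ((1 : Matrix (Fin n) (Fin n) ℂ) - M₀) = P - P * M₀ := by
      rw [Matrix.mul_sub, Matrix.mul_one]
    have e4 : 0 ≤ (P * ((1 : Matrix (Fin n) (Fin n) ℂ) - M₀)).trace :=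
      psd_trace_mul_nonneg hPpsd h1M₀
    rw [e3, Matrix.trace_sub, htrP] at e4
    rw [Complex.le_def] at e4
    have e5 := e4.1
    simp only [Complex.zero_re, Complex.sub_re, Complex.natCast_re] at e5
    rw [htrΘ]
    linarith
  -- conclusion
  have hk : s.card ≤ n := by
    simpa using Finset.card_le_univ s
  obtain ⟨t, htc, hle⟩ := trace_mul_le_top hW hWpsd hΘpsd hΘ1 s.card hk htrbound
  refine ⟨t, htc, ?_⟩
  have hfin : ∑ i ∈ s, hH.eigenvalues i
      = ((P * (((a : ℂ) ^ 2) • A + ((b : ℂ) ^ 2) • B + (c : ℂ) • specMean hA hB)).trace).re := by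
    rw [htrPH]
    simp
  rw [hfin, hE1]
  exact hle

end Heron
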